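/- Let μ^N ∈ P_1((ℝ^d)^N) be exchangeable and μ ∈ P_1(ℝ^d). For 1 ≤ k ≤ N let π_k be the projection onto the first k coordinates. Then the L^1 Wasserstein distance with respect to the additive metric ρ_1(x,y) = ∑_i |x^i − y^i| satisfies W̃_1(μ^N ∘ π_k^{−1}, μ^{⊗k}) ≤ (k/N) W̃_1(μ^N, μ^{⊗N}). -/

import Mathlib

open MeasureTheory

/-- The Kantorovich `L¹`-transport cost between two measures on `X` for a cost
function `ρ`, defined as the infimum over couplings. -/
noncomputable def W1 {X : Type*} [MeasurableSpace X] (ρ : X → X → ℝ)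
    (μ ν : Measure X) : ℝ :=
  sInf {r : ℝ | ∃ π : Measure (X × X), IsProbabilityMeasure π ∧
    π.map Prod.fst = μ ∧ π.map Prod.snd = ν ∧ r = ∫ p, ρ p.1 p.2 ∂π}

/-- The additive `ℓ¹` metric `ρ₁(x,y) = ∑ᵢ |xⁱ − yⁱ|` on `(ℝ^d)^m`. -/
noncomputable def rho1 {d m : ℕ} (x y : Fin m → EuclideanSpace ℝ (Fin d)) : ℝ :=
  ∑ i, ‖x i - y i‖


lemma pi_map_inj {E : Type*} [MeasurableSpace E] (μ : Measure E) [IsProbabilityMeasure μ]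
    {N k : ℕ} (f : Fin k → Fin N) (hf : Function.Injective f) :
    (Measure.pi fun _ : Fin N => μ).map (fun y i => y (f i)) =
      Measure.pi fun _ : Fin k => μ := by
  classical
  have hmeas : Measurable fun (y : Fin N → E) (i : Fin k) => y (f i) :=
    measurable_pi_lambda _ fun i => measurable_pi_apply (f i)
  refine (Measure.pi_eq fun s hs => ?_).symm
  rw [Measure.map_apply hmeas (MeasurableSet.univ_pi hs)]
  set t : Fin N → Set E := fun m => if h : ∃ i, f i = m then s h.choose else Set.univ with ht
  have htf : ∀ i, t (f i) = s i := by
    intro i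
    have h : ∃ i', f i' = f i := ⟨i, rfl⟩
    simp only [ht, dif_pos h]
    rw [hf h.choose_spec]
  have hpre : (fun (y : Fin N → E) (i : Fin k) => y (f i)) ⁻¹' Set.pi Set.univ s
      = Set.pi Set.univ t := by
    ext y
    simp only [Set.mem_preimage, Set.mem_pi, Set.mem_univ, true_implies]
    constructor
    · intro h m
      by_cases hm : ∃ i, f i = m
      · obtain ⟨i, rfl⟩ := hm
        rw [htf]; exact h i
      · simp [ht, dif_neg hm]
    · intro h i
      have := h (f i)
      rwa [htf] at this
  rw [hpre, Measure.pi_pi]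
  calc ∏ m, μ (t m) = ∏ m ∈ Finset.univ.image f, μ (t m) := by
        refine (Finset.prod_subset (Finset.subset_univ _) fun m _ hm => ?_).symm
        have : ¬ ∃ i, f i = m := fun ⟨i, hi⟩ =>
          hm (Finset.mem_image.2 ⟨i, Finset.mem_univ i, hi⟩)
        simp [ht, dif_neg this]
    _ = ∏ i, μ (t (f i)) := Finset.prod_image fun i _ j _ h => hf h
    _ = ∏ i, μ (s i) := by simp [htf]

lemma pi_map_eval {E : Type*} [MeasurableSpace E] (μ : Measure E) [IsProbabilityMeasure μ]
    {N : ℕ} (m : Fin N) :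
    (Measure.pi fun _ : Fin N => μ).map (fun y => y m) = μ := by
  ext s hs
  rw [Measure.map_apply (measurable_pi_apply m) hs]
  have : (fun y : Fin N → E => y m) ⁻¹' s
      = Set.pi Set.univ (Function.update (fun _ => Set.univ) m s) := by
    exact Set.eval_preimage
  rw [this, Measure.pi_pi]
  rw [Finset.prod_eq_single m (fun i _ hi => by simp [Function.update_of_ne hi])
    (fun h => absurd (Finset.mem_univ m) h)]
  simp

/-- For exchangeable `μ^N ∈ P₁((ℝ^d)^N)` and `μ ∈ P₁(ℝ^d)`,
`W̃₁(μ^N ∘ π_k⁻¹, μ^{⊗k}) ≤ (k/N) W̃₁(μ^N, μ^{⊗N})`. -/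
theorem stmt_6 (d N k : ℕ) (hk : 1 ≤ k) (hkN : k ≤ N)
    (μN : Measure (Fin N → EuclideanSpace ℝ (Fin d)))
    [IsProbabilityMeasure μN]
    (μ : Measure (EuclideanSpace ℝ (Fin d))) [IsProbabilityMeasure μ]
    (hexch : ∀ σ : Equiv.Perm (Fin N),
      μN.map (fun x => fun i => x (σ i)) = μN)
    (hμN1 : Integrable (fun x => ∑ i, ‖x i‖) μN)
    (hμ1 : Integrable (fun y => ‖y‖) μ) :
    W1 rho1 (μN.map (fun x (i : Fin k) => x (Fin.castLE hkN i)))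
        (Measure.pi fun _ : Fin k => μ) ≤
      (k : ℝ) / N * W1 rho1 μN (Measure.pi fun _ : Fin N => μ) := by
  classical
  haveI : NeZero N := ⟨by omega⟩
  set E := EuclideanSpace ℝ (Fin d)
  set X := Fin N → E
  set Y := Fin k → E
  set piN : Measure X := Measure.pi fun _ : Fin N => μ with hpiN
  set pik : Measure Y := Measure.pi fun _ : Fin k => μ with hpik
  set prk : X → Y := fun x i => x (Fin.castLE hkN i) with hprk
  -- continuity of cost
  have hcont : ∀ m : ℕ, Continuous fun p : (Fin m → E) × (Fin m → E) => rho1 p.1 p.2 := by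
    intro m
    unfold rho1
    exact continuous_finset_sum _ fun i _ =>
      (((continuous_apply i).comp continuous_fst).sub
        ((continuous_apply i).comp continuous_snd)).norm
  have hrho_nonneg : ∀ (m : ℕ) (x y : Fin m → E), 0 ≤ rho1 x y := by
    intro m x y
    exact Finset.sum_nonneg fun i _ => norm_nonneg _
  -- the RHS set
  set SN : Set ℝ := {r : ℝ | ∃ π : Measure (X × X), IsProbabilityMeasure π ∧
    π.map Prod.fst = μN ∧ π.map Prod.snd = piN ∧ r = ∫ p, rho1 p.1 p.2 ∂π} with hSN
  have hSne : SN.Nonempty := by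
    refine ⟨∫ p, rho1 p.1 p.2 ∂(μN.prod piN), μN.prod piN, inferInstance, ?_, ?_, rfl⟩
    · simp [Measure.map_fst_prod]
    · simp [Measure.map_snd_prod]
  -- key estimate
  have key : ∀ r ∈ SN, W1 rho1 (μN.map prk) pik ≤ (k : ℝ) / N * r := by
    rintro r ⟨π, hπp, hπ1, hπ2, hr⟩
    haveI := hπp
    -- coordinate costs
    set c : Fin N → ℝ := fun m => ∫ p : X × X, ‖p.1 m - p.2 m‖ ∂π with hc
    have hmeasc : ∀ m : Fin N, Measurable fun p : X × X => ‖p.1 m - p.2 m‖ := fun m =>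
      (((measurable_pi_apply m).comp measurable_fst).sub
        ((measurable_pi_apply m).comp measurable_snd)).norm
    have hint1 : ∀ m : Fin N, Integrable (fun p : X × X => ‖p.1 m‖) π := by
      intro m
      have hxm : Integrable (fun x : X => ‖x m‖) μN := by
        refine hμN1.mono ((measurable_pi_apply m).norm.aestronglyMeasurable) ?_
        refine Filter.Eventually.of_forall fun x => ?_
        rw [Real.norm_of_nonneg (norm_nonneg _)]
        refine le_trans (Finset.single_le_sum (fun i _ => norm_nonneg (x i))
          (Finset.mem_univ m)) (le_abs_self _)
      rw [← hπ1] at hxm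
      exact (integrable_map_measure ((measurable_pi_apply m).norm.aestronglyMeasurable)
        measurable_fst.aemeasurable).mp hxm
    have hint2 : ∀ m : Fin N, Integrable (fun p : X × X => ‖p.2 m‖) π := by
      intro m
      have hym : Integrable (fun y : X => ‖y m‖) piN := by
        have hev : piN.map (fun y : X => y m) = μ := pi_map_eval μ m
        have : Integrable (fun v : E => ‖v‖) (piN.map (fun y : X => y m)) := by
          rw [hev]; exact hμ1
        exact (integrable_map_measure measurable_norm.aestronglyMeasurable
          (measurable_pi_apply m).aemeasurable).mp this
      rw [← hπ2] at hym
      exact (integrable_map_measure ((measurable_pi_apply m).norm.aestronglyMeasurable)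
        measurable_snd.aemeasurable).mp hym
    have hintc : ∀ m : Fin N, Integrable (fun p : X × X => ‖p.1 m - p.2 m‖) π := by
      intro m
      refine ((hint1 m).add (hint2 m)).mono (hmeasc m).aestronglyMeasurable ?_
      refine Filter.Eventually.of_forall fun p => ?_
      rw [Real.norm_of_nonneg (norm_nonneg _)]
      refine le_trans (norm_sub_le _ _) (le_abs_self _)
    have hr' : r = ∑ m, c m := by
      rw [hr]
      unfold rho1
      exact integral_finset_sum _ fun m _ => hintc m
    -- shifted projections
    set f : Fin N → Fin k → Fin N := fun j i => Fin.castLE hkN i + j with hf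
    have hfinj : ∀ j, Function.Injective (f j) := by
      intro j i i' h
      simp only [hf] at h
      exact Fin.castLE_injective hkN (add_right_cancel h)
    set g : Fin N → X → Y := fun j x i => x (f j i) with hg
    have hgmeas : ∀ j, Measurable (g j) := fun j =>
      measurable_pi_lambda _ fun i => measurable_pi_apply (f j i)
    set Φ : Fin N → (X × X) → (Y × Y) := fun j p => (g j p.1, g j p.2) with hΦ
    have hΦmeas : ∀ j, Measurable (Φ j) := fun j =>
      ((hgmeas j).comp measurable_fst).prod ((hgmeas j).comp measurable_snd)
    -- marginals of the shifted couplings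
    have hmarg1 : ∀ j, (π.map (Φ j)).map Prod.fst = μN.map prk := by
      intro j
      rw [Measure.map_map measurable_fst (hΦmeas j)]
      have h1 : (Prod.fst ∘ Φ j) = (g j) ∘ (Prod.fst : X × X → X) := rfl
      rw [h1, ← Measure.map_map (hgmeas j) measurable_fst, hπ1]
      have h2 : g j = prk ∘ (fun x : X => fun i : Fin N => x (i + j)) := rfl
      have hshift : Measurable (fun x : X => fun i : Fin N => x (i + j)) :=
        measurable_pi_lambda _ fun i => measurable_pi_apply _
      rw [h2, ← Measure.map_map (measurable_pi_lambda _ fun i =>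
        measurable_pi_apply _) hshift]
      congr 1
      have := hexch (Equiv.addRight j)
      simpa [Equiv.coe_addRight] using this
    have hmarg2 : ∀ j, (π.map (Φ j)).map Prod.snd = pik := by
      intro j
      rw [Measure.map_map measurable_snd (hΦmeas j)]
      have h1 : (Prod.snd ∘ Φ j) = (g j) ∘ (Prod.snd : X × X → X) := rfl
      rw [h1, ← Measure.map_map (hgmeas j) measurable_snd, hπ2]
      exact pi_map_inj μ (f j) (hfinj j)
    -- cost of the shifted couplings
    set v : Fin N → ℝ := fun j => ∑ i : Fin k, c (f j i) with hv
    have hcost : ∀ j, ∫ p, rho1 p.1 p.2 ∂(π.map (Φ j)) = v j := by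
      intro j
      rw [integral_map (hΦmeas j).aemeasurable (hcont k).aestronglyMeasurable]
      have : (fun p : X × X => rho1 (Φ j p).1 (Φ j p).2)
          = fun p : X × X => ∑ i : Fin k, ‖p.1 (f j i) - p.2 (f j i)‖ := rfl
      rw [this]
      exact integral_finset_sum _ fun i _ => hintc (f j i)
    -- each v j bounds W1 from above
    have hmem : ∀ j, v j ∈ {r : ℝ | ∃ π' : Measure (Y × Y), IsProbabilityMeasure π' ∧
        π'.map Prod.fst = μN.map prk ∧ π'.map Prod.snd = pik ∧
        r = ∫ p, rho1 p.1 p.2 ∂π'} := by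
      intro j
      exact ⟨π.map (Φ j), Measure.isProbabilityMeasure_map (hΦmeas j).aemeasurable,
        hmarg1 j, hmarg2 j, (hcost j).symm⟩
    have hbdd : BddBelow {r : ℝ | ∃ π' : Measure (Y × Y), IsProbabilityMeasure π' ∧
        π'.map Prod.fst = μN.map prk ∧ π'.map Prod.snd = pik ∧
        r = ∫ p, rho1 p.1 p.2 ∂π'} := by
      refine ⟨0, ?_⟩
      rintro s ⟨π', _, _, _, rfl⟩
      exact integral_nonneg fun p => hrho_nonneg k p.1 p.2
    have hW1le : ∀ j, W1 rho1 (μN.map prk) pik ≤ v j := by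
      intro j
      exact csInf_le hbdd (hmem j)
    -- sum of the v j
    have hsum : ∑ j : Fin N, v j = k * r := by
      rw [hv]
      simp only
      rw [Finset.sum_comm]
      have : ∀ i : Fin k, ∑ j : Fin N, c (Fin.castLE hkN i + j) = ∑ m : Fin N, c m := by
        intro i
        exact Fintype.sum_equiv (Equiv.addLeft (Fin.castLE hkN i)) _ _ fun j => rfl
      rw [Finset.sum_congr rfl fun i _ => this i]
      rw [Finset.sum_const, Finset.card_univ, Fintype.card_fin, nsmul_eq_mul, hr']
    -- pick a good j
    have hNpos : (0 : ℝ) < N := by exact_mod_cast Nat.pos_of_ne_zero (NeZero.ne N)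
    have hex : ∃ j : Fin N, v j ≤ (k : ℝ) / N * r := by
      have h := Finset.exists_le_of_sum_le (Finset.univ_nonempty (α := Fin N))
        (f := v) (g := fun _ : Fin N => (k : ℝ) / N * r) ?_
      · obtain ⟨j, _, hj⟩ := h
        exact ⟨j, hj⟩
      · rw [hsum, Finset.sum_const, Finset.card_univ, Fintype.card_fin, nsmul_eq_mul]
        have hNe : (N : ℝ) ≠ 0 := ne_of_gt hNpos
        rw [← mul_assoc]
        field_simp
        exact le_rfl
    obtain ⟨j, hj⟩ := hex
    exact (hW1le j).trans hj
  -- conclude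
  have hkpos : (0 : ℝ) < k := by exact_mod_cast hk
  have hNpos : (0 : ℝ) < N := by exact_mod_cast (by omega : 1 ≤ N)
  have hcpos : (0 : ℝ) < (k : ℝ) / N := div_pos hkpos hNpos
  have hdiv : W1 rho1 (μN.map prk) pik / ((k : ℝ) / N) ≤ sInf SN :=
    le_csInf hSne fun r hr => (div_le_iff₀ hcpos).2 (by rw [mul_comm]; exact key r hr)
  have hfin : W1 rho1 (μN.map prk) pik ≤ (k : ℝ) / N * sInf SN := by
    rw [mul_comm]; exact (div_le_iff₀ hcpos).1 hdiv
  have hWS : W1 rho1 μN piN = sInf SN := rfl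
  rw [hWS]
  exact hfin
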